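/- There exists a constant C such that for every m ≥ 1, the number of distinct words of length m over {−1,+1} that occur as a contiguous subword (factor) of S(n) for some n ≥ 0 is at most C·m, where S(n) are the 1-dimensional paperfolding patterns. -/

import Mathlib

/-- Reflection of a word of creases: reverse and negate every sign. -/
def rPF (w : List ℤ) : List ℤ := (w.map (fun s => -s)).reverse

/-- The 1-dimensional paperfolding patterns: `S(0) = []` and
`S(n+1) = r(S(n)) ++ [+1] ++ S(n)`; `S(n)` has length `2^n − 1`. -/
def SPF : ℕ → List ℤ
  | 0 => []
  | n + 1 => rPF (SPF n) ++ [1] ++ SPF n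

/-- The set of factors of length `m` of the paperfolding patterns. -/
def pfFactors (m : ℕ) : Set (List ℤ) :=
  {w | w.length = m ∧ ∃ n : ℕ, w <:+: SPF n}

namespace PFaux

lemma rPF_append (a b : List ℤ) : rPF (a ++ b) = rPF b ++ rPF a := by
  simp [rPF]

lemma rPF_rPF (a : List ℤ) : rPF (rPF a) = a := by
  simp [rPF, List.map_reverse, List.map_map, Function.comp]

lemma rPF_length (a : List ℤ) : (rPF a).length = a.length := by
  simp [rPF]

lemma rPF_inj {a b : List ℤ} (h : rPF a = rPF b) : a = b := by
  have := congrArg rPF h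
  rwa [rPF_rPF, rPF_rPF] at this

lemma rPF_infix {a b : List ℤ} (h : a <:+: b) : rPF a <:+: rPF b := by
  exact List.reverse_infix.mpr (h.map _)

lemma rPF_prefix_of_suffix {a b : List ℤ} (h : a <:+ b) : rPF a <+: rPF b := by
  exact List.reverse_prefix.mpr (h.map _)

lemma SPF_length : ∀ n, (SPF n).length = 2 ^ n - 1 := by
  intro n
  induction n with
  | zero => rfl
  | succ n ih =>
    have h1 : 1 ≤ 2 ^ n := Nat.one_le_two_pow
    simp only [SPF, List.length_append, rPF_length, List.length_cons,
      List.length_nil, ih, pow_succ]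
    omega

lemma rPF_SPF_succ (n : ℕ) :
    rPF (SPF (n+1)) = rPF (SPF n) ++ [-1] ++ SPF n := by
  show rPF (rPF (SPF n) ++ [1] ++ SPF n) = _
  rw [rPF_append, rPF_append, rPF_rPF]
  simp [rPF]

lemma suffix_of_suffix_length_le {α : Type*} {l₁ l₂ l₃ : List α}
    (h1 : l₁ <:+ l₃) (h2 : l₂ <:+ l₃) (h : l₁.length ≤ l₂.length) : l₁ <:+ l₂ := by
  rw [← List.reverse_prefix] at h1 h2 ⊢
  exact List.prefix_of_prefix_length_le h1 h2 (by simpa using h)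

lemma infix_mid {w X Y : List ℤ} {c : ℤ} (h : w <:+: X ++ [c] ++ Y) :
    w <:+: X ∨ w <:+: Y ∨ ∃ u v, u <:+ X ∧ v <+: Y ∧ w = u ++ [c] ++ v := by
  obtain ⟨s, t, hst⟩ := h
  have hlen := congrArg List.length hst
  simp only [List.length_append, List.length_cons, List.length_nil] at hlen
  by_cases h1 : s.length + w.length ≤ X.length
  · left
    have hp1 : s ++ w <+: X ++ [c] ++ Y := ⟨t, by simpa [List.append_assoc] using hst⟩
    have hp2 : X <+: X ++ [c] ++ Y :=
      (List.prefix_append X [c]).trans (List.prefix_append (X ++ [c]) Y)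
    have hsw : s ++ w <+: X :=
      List.prefix_of_prefix_length_le hp1 hp2 (by simpa using h1)
    exact ((List.suffix_append s w).isInfix).trans hsw.isInfix
  · by_cases h2 : X.length + 1 ≤ s.length
    · right; left
      have hs1 : w ++ t <:+ X ++ [c] ++ Y := ⟨s, by simpa [List.append_assoc] using hst⟩
      have hs2 : Y <:+ X ++ [c] ++ Y := List.suffix_append (X ++ [c]) Y
      have hwt : w ++ t <:+ Y :=
        suffix_of_suffix_length_le hs1 hs2 (by simp; omega)
      exact ((List.prefix_append w t).isInfix).trans hwt.isInfix
    · right; right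
      push_neg at h1 h2
      have hsp : s <+: X := by
        refine List.prefix_of_prefix_length_le ⟨w ++ t, by simpa [List.append_assoc] using hst⟩
          ((List.prefix_append X [c]).trans (List.prefix_append (X ++ [c]) Y)) (by omega)
      obtain ⟨u, hu⟩ := hsp
      have heq : w ++ t = u ++ ([c] ++ Y) := by
        apply List.append_cancel_left (as := s)
        rw [← List.append_assoc, ← List.append_assoc]
        rw [hst, ← hu]
        simp [List.append_assoc]
      have hul : s.length + u.length = X.length := by
        have := congrArg List.length hu
        simp at this; omega
      have hp3 : u ++ [c] <+: w ++ t := ⟨Y, by rw [heq]; simp⟩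
      have hp4 : u ++ [c] <+: w :=
        List.prefix_of_prefix_length_le hp3 (List.prefix_append w t) (by simp; omega)
      obtain ⟨v, hv⟩ := hp4
      refine ⟨u, v, ⟨s, hu⟩, ⟨t, ?_⟩, by rw [← hv]⟩
      have h5 : (u ++ [c]) ++ (v ++ t) = (u ++ [c]) ++ Y := by
        rw [← List.append_assoc, hv, heq, ← List.append_assoc]
      exact List.append_cancel_left h5

/-- The canonical straddling word. -/
def gPF (N a b : ℕ) : List ℤ := rPF ((SPF N).take a) ++ [1] ++ (SPF N).take b

lemma main : ∀ n, ∀ w : List ℤ, w <:+: SPF n → w.length ≠ 0 →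
    ∃ N a b, a + 1 + b = w.length ∧ a ≤ (SPF N).length ∧ b ≤ (SPF N).length ∧
      (w = gPF N a b ∨ w = rPF (gPF N a b)) := by
  intro n
  induction n with
  | zero =>
    intro w hw hl
    simp [SPF] at hw
    simp [hw] at hl
  | succ n ih =>
    intro w hw hl
    have hw' : w <:+: rPF (SPF n) ++ [1] ++ SPF n := hw
    rcases infix_mid hw' with h | h | ⟨u, v, hu, hv, hwe⟩
    · -- w inside the reflected half
      have h' : rPF w <:+: SPF n := by
        have := rPF_infix h
        rwa [rPF_rPF] at this
      obtain ⟨N, a, b, h1, h2, h3, h4⟩ := ih (rPF w) h' (by rwa [rPF_length])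
      refine ⟨N, a, b, by rwa [rPF_length] at h1, h2, h3, ?_⟩
      rcases h4 with h4 | h4
      · right
        rw [← h4, rPF_rPF]
      · left
        exact rPF_inj h4
    · exact ih w h hl
    · -- straddling word
      have h1 : rPF u <+: SPF n := by
        have := rPF_prefix_of_suffix hu
        rwa [rPF_rPF] at this
      have h2 : rPF u = (SPF n).take u.length := by
        have := List.prefix_iff_eq_take.mp h1
        rwa [rPF_length] at this
      have h3 : v = (SPF n).take v.length := List.prefix_iff_eq_take.mp hv
      refine ⟨n, u.length, v.length, by
        simp only [hwe, List.length_append, List.length_cons, List.length_nil],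
        ?_, hv.length_le, Or.inl ?_⟩
      · have := hu.length_le
        rwa [rPF_length] at this
      · rw [hwe]
        unfold gPF
        rw [← h2, ← h3, rPF_rPF]

lemma take_SPF_stable (n L : ℕ) (h : L ≤ 2 ^ n - 1) :
    (SPF (n+2)).take L = (SPF (n+1)).take L := by
  have hlen : L ≤ (rPF (SPF n)).length := by rw [rPF_length, SPF_length]; exact h
  have e1 : (SPF (n+1)).take L = (rPF (SPF n)).take L := by
    show ((rPF (SPF n) ++ [1]) ++ SPF n).take L = _
    rw [List.take_append_of_le_length (by simp; omega),
        List.take_append_of_le_length hlen]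
  have e2 : (SPF (n+2)).take L = (rPF (SPF n)).take L := by
    show ((rPF (SPF (n+1)) ++ [1]) ++ SPF (n+1)).take L = _
    have hlen2 : L ≤ (rPF (SPF (n+1))).length := by
      rw [rPF_length, SPF_length]
      have : 2 ^ n ≤ 2 ^ (n+1) := Nat.pow_le_pow_right (by norm_num) (by omega)
      omega
    rw [List.take_append_of_le_length (by simp at hlen2 ⊢; omega),
        List.take_append_of_le_length hlen2, rPF_SPF_succ]
    rw [List.take_append_of_le_length (by simp at hlen ⊢; omega),
        List.take_append_of_le_length hlen]
  rw [e1, e2]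

lemma take_SPF_ge (n L : ℕ) (h : L + 1 ≤ 2 ^ n) :
    ∀ k, (SPF (n+1+k)).take L = (SPF (n+1)).take L := by
  intro k
  induction k with
  | zero => rfl
  | succ k ih =>
    have he : n + 1 + (k + 1) = (n + k) + 2 := by omega
    rw [he, take_SPF_stable (n+k) L ?_]
    · rw [show n + k + 1 = n + 1 + k by omega]; exact ih
    · have : 2 ^ n ≤ 2 ^ (n+k) := Nat.pow_le_pow_right (by norm_num) (by omega)
      omega

end PFaux

open PFaux in
/-- There is a constant `C` such that for every `m ≥ 1`, the number of distinct
words of length `m` over `{−1, +1}` occurring as contiguous subwords of some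
`S(n)` is at most `C · m`. -/
theorem stmt15 :
    ∃ C : ℕ, ∀ m : ℕ, 1 ≤ m →
      (pfFactors m).Finite ∧ (pfFactors m).ncard ≤ C * m := by
  refine ⟨6, ?_⟩
  intro m hm
  set c := Nat.clog 2 m with hc
  set f : ℕ × ℕ → List ℤ := fun p => gPF (c - 1 + p.2) p.1 (m - 1 - p.1) with hf
  set F : Finset (List ℤ) :=
    Finset.image f ((Finset.range m) ×ˢ (Finset.range 3)) ∪
      Finset.image (fun p => rPF (f p)) ((Finset.range m) ×ˢ (Finset.range 3)) with hF
  have hsub : pfFactors m ⊆ ↑F := by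
    rintro w ⟨hwlen, n, hw⟩
    obtain ⟨N, a, b, hab, haN, hbN, hwg⟩ := main n w hw (by omega)
    rw [hwlen] at hab
    rw [SPF_length] at haN hbN
    have hb : b = m - 1 - a := by omega
    have hstep : ∃ j < 3, gPF N a b = gPF (c - 1 + j) a b := by
      by_cases hm1 : m = 1
      · have ha0 : a = 0 := by omega
        have hb0 : b = 0 := by omega
        exact ⟨0, by norm_num, by simp [ha0, hb0, gPF, rPF]⟩
      · have hc1 : 1 ≤ c := by
          by_contra hcon
          have hc0 : c = 0 := by omega
          have := Nat.le_pow_clog one_lt_two m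
          rw [← hc, hc0] at this
          simp at this
          omega
        by_cases hN : N ≤ c
        · have hm2 : m ≤ 2 ^ (N + 1) := by
            have h2 : 1 ≤ 2 ^ N := Nat.one_le_two_pow
            have : (2:ℕ) ^ (N+1) = 2 * 2 ^ N := by rw [pow_succ]; ring
            omega
          have hcN : c ≤ N + 1 := by
            rw [hc]
            exact (Nat.clog_le_iff_le_pow one_lt_two).mpr hm2
          refine ⟨N - (c - 1), by omega, ?_⟩
          congr 1
          omega
        · have hpow : m ≤ 2 ^ c := by rw [hc]; exact Nat.le_pow_clog one_lt_two m
          have key : ∀ L, L + 1 ≤ 2 ^ c → (SPF N).take L = (SPF (c+1)).take L := by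
            intro L hL
            have hN' : N = c + 1 + (N - (c + 1)) := by omega
            rw [hN']
            exact take_SPF_ge c L hL _
          refine ⟨2, by norm_num, ?_⟩
          have he : c - 1 + 2 = c + 1 := by omega
          rw [he]
          unfold gPF
          rw [key a (by omega), key b (by omega)]
    obtain ⟨j, hj, hgeq⟩ := hstep
    have hfval : f (a, j) = gPF N a b := by
      simp only [hf]
      rw [← hb, ← hgeq]
    have hmem : (a, j) ∈ (Finset.range m) ×ˢ (Finset.range 3) := by
      simp only [Finset.mem_product, Finset.mem_range]
      omega
    rcases hwg with hwg | hwg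
    · exact Finset.mem_coe.mpr (Finset.mem_union_left _
        (Finset.mem_image.mpr ⟨(a, j), hmem, by rw [hfval, ← hwg]⟩))
    · exact Finset.mem_coe.mpr (Finset.mem_union_right _
        (Finset.mem_image.mpr ⟨(a, j), hmem, by rw [hfval, ← hwg]⟩))
  have hfin : (pfFactors m).Finite := Set.Finite.subset F.finite_toSet hsub
  refine ⟨hfin, ?_⟩
  have hcard : F.card ≤ 6 * m := by
    have h1 := Finset.card_union_le
      (Finset.image f ((Finset.range m) ×ˢ (Finset.range 3)))
      (Finset.image (fun p => rPF (f p)) ((Finset.range m) ×ˢ (Finset.range 3)))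
    have h2 : (Finset.image f ((Finset.range m) ×ˢ (Finset.range 3))).card
        ≤ m * 3 := le_trans Finset.card_image_le (by simp)
    have h3 : (Finset.image (fun p => rPF (f p))
        ((Finset.range m) ×ˢ (Finset.range 3))).card ≤ m * 3 :=
      le_trans Finset.card_image_le (by simp)
    rw [hF]
    omega
  calc (pfFactors m).ncard ≤ (↑F : Set (List ℤ)).ncard :=
        Set.ncard_le_ncard hsub F.finite_toSet
    _ = F.card := Set.ncard_coe_finset F
    _ ≤ 6 * m := hcard
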